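/- Let d ≥ 1, n ≥ 1, g₁,…,gₙ ∈ ℝ, A ∈ ℂ with A ≠ 0, ω ∈ ℝ and k ∈ ℝ^d, and let φ(t,x) = A·exp(i(ωt − k·x)) be the plane wave. Then φ satisfies the higher-derivative Carrollian field equation (□_{g₁} ∘ ⋯ ∘ □_{gₙ})φ = 0 identically on ℝ × ℝ^d if and only if there exists j ∈ {1,…,n} with g_j·ω² + ‖k‖² = 0. -/

import Mathlib

/-- Second time derivative: `(∂²φ/∂t²)(t,x)`. -/
noncomputable def dtt (d : ℕ) (φ : ℝ × EuclideanSpace ℝ (Fin d) → ℂ) :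
    ℝ × EuclideanSpace ℝ (Fin d) → ℂ :=
  fun p => deriv (deriv (fun u : ℝ => φ (u, p.2))) p.1

/-- Spatial Laplacian: `Σ_a (∂²φ/∂x_a²)(t,x)`, computed as second directional
derivatives along the coordinate directions. -/
noncomputable def lap (d : ℕ) (φ : ℝ × EuclideanSpace ℝ (Fin d) → ℂ) :
    ℝ × EuclideanSpace ℝ (Fin d) → ℂ :=
  fun p => ∑ a : Fin d,
    deriv (deriv (fun u : ℝ => φ (p.1, p.2 + u • EuclideanSpace.single a (1 : ℝ)))) 0

/-- The Carrollian operator `□_g φ = g ∂²φ/∂t² + Δφ`. -/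
noncomputable def carrollBox (d : ℕ) (g : ℝ) (φ : ℝ × EuclideanSpace ℝ (Fin d) → ℂ) :
    ℝ × EuclideanSpace ℝ (Fin d) → ℂ :=
  fun p => (g : ℂ) * dtt d φ p + lap d φ p

/-- The plane wave `φ(t,x) = A·exp(i(ωt − k·x))`. -/
noncomputable def planeWave (d : ℕ) (A : ℂ) (ω : ℝ) (k : EuclideanSpace ℝ (Fin d)) :
    ℝ × EuclideanSpace ℝ (Fin d) → ℂ :=
  fun p => A * Complex.exp (Complex.I * (((ω * p.1 : ℝ) : ℂ) - ((inner ℝ k p.2 : ℝ) : ℂ)))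

lemma hasDerivAt_aexp (A a b : ℂ) (u : ℝ) :
    HasDerivAt (fun u : ℝ => A * Complex.exp (a * u + b)) (A * a * Complex.exp (a * u + b)) u := by
  have h0 : HasDerivAt (fun u : ℝ => a * (u:ℂ) + b) a u := by
    simpa using ((Complex.ofRealCLM.hasDerivAt (x := u)).const_mul a).add_const b
  have := (h0.cexp).const_mul A
  exact this.congr_deriv (by ring)

lemma deriv2_aexp (A a b : ℂ) (u : ℝ) :
    deriv (deriv (fun u : ℝ => A * Complex.exp (a * u + b))) u
      = A * a ^ 2 * Complex.exp (a * u + b) := by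
  have h1 : deriv (fun u : ℝ => A * Complex.exp (a * u + b))
      = fun u : ℝ => (A * a) * Complex.exp (a * u + b) :=
    funext fun v => (hasDerivAt_aexp A a b v).deriv
  rw [h1, (hasDerivAt_aexp (A * a) a b u).deriv]; ring

lemma dtt_planeWave (d : ℕ) (A : ℂ) (ω : ℝ) (k : EuclideanSpace ℝ (Fin d))
    (p : ℝ × EuclideanSpace ℝ (Fin d)) :
    dtt d (planeWave d A ω k) p = -(ω:ℂ)^2 * planeWave d A ω k p := by
  have hf : (fun u : ℝ => planeWave d A ω k (u, p.2))
      = fun u : ℝ => A * Complex.exp ((Complex.I * ω) * u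
          + (-(Complex.I * ((inner ℝ k p.2 : ℝ) : ℂ)))) := by
    funext u; simp only [planeWave]; congr 1; push_cast; ring
  simp only [dtt]
  rw [hf, deriv2_aexp]
  simp only [planeWave]
  rw [show Complex.I * (((ω * p.1 : ℝ):ℂ) - ((inner ℝ k p.2 : ℝ):ℂ))
      = (Complex.I * ω) * p.1 + (-(Complex.I * ((inner ℝ k p.2 : ℝ):ℂ))) by push_cast; ring]
  rw [mul_pow, Complex.I_sq]; ring

lemma lap_planeWave (d : ℕ) (A : ℂ) (ω : ℝ) (k : EuclideanSpace ℝ (Fin d))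
    (p : ℝ × EuclideanSpace ℝ (Fin d)) :
    lap d (planeWave d A ω k) p = -((‖k‖^2 : ℝ):ℂ) * planeWave d A ω k p := by
  have hterm : ∀ a : Fin d,
      deriv (deriv (fun u : ℝ =>
        planeWave d A ω k (p.1, p.2 + u • EuclideanSpace.single a (1 : ℝ)))) 0
      = -((k a : ℝ):ℂ)^2 * planeWave d A ω k p := by
    intro a
    have hinner : ∀ u : ℝ,
        (inner ℝ k (p.2 + u • EuclideanSpace.single a (1:ℝ)) : ℝ) = inner ℝ k p.2 + u * k a := by
      intro u
      rw [inner_add_right, real_inner_smul_right, EuclideanSpace.inner_single_right]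
      simp
    have hf : (fun u : ℝ =>
        planeWave d A ω k (p.1, p.2 + u • EuclideanSpace.single a (1 : ℝ)))
        = fun u : ℝ => A * Complex.exp ((-(Complex.I * ((k a : ℝ):ℂ))) * u
            + (Complex.I * (((ω * p.1 : ℝ):ℂ) - ((inner ℝ k p.2 : ℝ):ℂ)))) := by
      funext u; simp only [planeWave, hinner]; congr 1; push_cast; ring
    rw [hf, deriv2_aexp]
    simp only [planeWave]
    rw [show (-(Complex.I * ((k a : ℝ):ℂ))) * (0:ℝ)
        + (Complex.I * (((ω * p.1 : ℝ):ℂ) - ((inner ℝ k p.2 : ℝ):ℂ)))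
        = Complex.I * (((ω * p.1 : ℝ):ℂ) - ((inner ℝ k p.2 : ℝ):ℂ)) by push_cast; ring]
    rw [show (-(Complex.I * ((k a : ℝ):ℂ)))^2 = -((k a : ℝ):ℂ)^2 by
      rw [neg_pow, mul_pow, Complex.I_sq]; ring]
    ring
  have hnorm : ((‖k‖^2 : ℝ):ℂ) = ∑ a : Fin d, ((k a : ℝ):ℂ)^2 := by
    have : (‖k‖^2:ℝ) = ∑ a, k a ^ 2 := by
      rw [← real_inner_self_eq_norm_sq, PiLp.inner_apply]; ring_nf; simp [pow_two]
    rw [this]; push_cast; rfl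
  simp only [lap, hterm, hnorm]
  rw [← Finset.sum_mul, Finset.sum_neg_distrib]

lemma carrollBox_planeWave (d : ℕ) (gg : ℝ) (A : ℂ) (ω : ℝ) (k : EuclideanSpace ℝ (Fin d)) :
    carrollBox d gg (planeWave d A ω k)
      = planeWave d ((-(((gg:ℂ)) * (ω:ℂ)^2 + ((‖k‖^2 : ℝ):ℂ))) * A) ω k := by
  funext p
  simp only [carrollBox, dtt_planeWave, lap_planeWave, planeWave]
  ring

lemma foldr_planeWave (d : ℕ) (ω : ℝ) (k : EuclideanSpace ℝ (Fin d)) :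
    ∀ (l : List ℝ) (A : ℂ), l.foldr (carrollBox d) (planeWave d A ω k)
      = planeWave d ((l.map (fun gg : ℝ => -(((gg:ℂ)) * (ω:ℂ)^2 + ((‖k‖^2 : ℝ):ℂ)))).prod * A) ω k
  | [], A => by simp
  | (gg :: l), A => by
    simp only [List.foldr_cons, foldr_planeWave d ω k l A, carrollBox_planeWave,
      List.map_cons, List.prod_cons]
    rw [mul_assoc]

theorem planeWave_solves_iff (d : ℕ) (hd : 1 ≤ d) (n : ℕ) (hn : 1 ≤ n)
    (g : Fin n → ℝ) (A : ℂ) (hA : A ≠ 0) (ω : ℝ) (k : EuclideanSpace ℝ (Fin d)) :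
    (∀ p : ℝ × EuclideanSpace ℝ (Fin d),
        (List.ofFn g).foldr (carrollBox d) (planeWave d A ω k) p = 0)
      ↔ ∃ j : Fin n, g j * ω ^ 2 + ‖k‖ ^ 2 = 0 := by
  rw [show (List.ofFn g).foldr (carrollBox d) (planeWave d A ω k)
      = planeWave d (((List.ofFn g).map
          (fun gg : ℝ => -(((gg:ℂ)) * (ω:ℂ)^2 + ((‖k‖^2 : ℝ):ℂ)))).prod * A) ω k from
    foldr_planeWave d ω k _ A]
  set P := ((List.ofFn g).map (fun gg : ℝ => -(((gg:ℂ)) * (ω:ℂ)^2 + ((‖k‖^2 : ℝ):ℂ)))).prod with hP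
  constructor
  · intro h
    have h0 := h (0, 0)
    simp only [planeWave] at h0
    rcases mul_eq_zero.1 h0 with hB | hexp
    · rcases mul_eq_zero.1 hB with hP0 | hA0
      · rw [hP, List.prod_eq_zero_iff] at hP0
        obtain ⟨x, hx, hx0⟩ := List.mem_map.1 hP0
        obtain ⟨j, rfl⟩ := List.mem_ofFn.1 hx
        refine ⟨j, ?_⟩
        exact_mod_cast neg_eq_zero.1 hx0
      · exact absurd hA0 hA
    · exact absurd hexp (Complex.exp_ne_zero _)
  · rintro ⟨j, hj⟩
    have hP0 : P = 0 := by
      rw [hP, List.prod_eq_zero_iff]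
      refine List.mem_map.2 ⟨g j, List.mem_ofFn.2 ⟨j, rfl⟩, ?_⟩
      rw [neg_eq_zero]
      exact_mod_cast hj
    intro p; simp [planeWave, hP0]
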